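/- Along any solution of the 3D pendulum equations, the vertical component of angular momentum h = ωᵀ J Rᵀe₃ is constant. -/

import Mathlib

open Matrix

attribute [local instance] Matrix.frobeniusNormedAddCommGroup Matrix.frobeniusNormedSpace

noncomputable def hat (ω : Fin 3 → ℝ) : Matrix (Fin 3) (Fin 3) ℝ :=
  !![0, -ω 2, ω 1; ω 2, 0, -ω 0; -ω 1, ω 0, 0]

def SO3 : Set (Matrix (Fin 3) (Fin 3) ℝ) := {R | R * Rᵀ = 1 ∧ R.det = 1}

noncomputable def e3 : Fin 3 → ℝ := ![0, 0, 1]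

noncomputable def entryCLM (i j : Fin 3) : Matrix (Fin 3) (Fin 3) ℝ →L[ℝ] ℝ :=
  LinearMap.toContinuousLinearMap
    { toFun := fun M => M i j, map_add' := fun _ _ => rfl, map_smul' := fun _ _ => rfl }

/-- Along any solution of the 3D pendulum equations, the vertical component of the
angular momentum `h = ωᵀ J Rᵀe₃` is constant. -/
theorem momentum_conserved
    (J : Matrix (Fin 3) (Fin 3) ℝ) (hJsymm : J.IsSymm) (hJpos : J.PosDef)
    (m g : ℝ) (hm : 0 < m) (hg : 0 < g) (ρ : Fin 3 → ℝ)
    (R : ℝ → Matrix (Fin 3) (Fin 3) ℝ) (ω ω' : ℝ → Fin 3 → ℝ)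
    (hSO : ∀ t, R t ∈ SO3)
    (hω : ∀ t, HasDerivAt ω (ω' t) t)
    (hR : ∀ t, HasDerivAt R (R t * hat (ω t)) t)
    (hdyn : ∀ t, J.mulVec (ω' t) =
      crossProduct (J.mulVec (ω t)) (ω t)
        + (m * g) • crossProduct ρ ((R t)ᵀ.mulVec e3)) :
    ∀ t s : ℝ,
      ω t ⬝ᵥ J.mulVec ((R t)ᵀ.mulVec e3) = ω s ⬝ᵥ J.mulVec ((R s)ᵀ.mulVec e3) := by
  have hωc : ∀ t (i : Fin 3), HasDerivAt (fun t => ω t i) (ω' t i) t := fun t i =>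
    ((ContinuousLinearMap.proj i : (Fin 3 → ℝ) →L[ℝ] ℝ).hasFDerivAt.comp_hasDerivAt t (hω t))
  have hRc : ∀ t (i j : Fin 3), HasDerivAt (fun t => R t i j) ((R t * hat (ω t)) i j) t := by
    intro t i j
    have := (entryCLM i j).hasFDerivAt.comp_hasDerivAt t (hR t)
    exact this
  have key : ∀ t, HasDerivAt (fun t => ω t ⬝ᵥ J.mulVec ((R t)ᵀ.mulVec e3)) 0 t := by
    intro t
    have H : HasDerivAt (fun t => ∑ i : Fin 3, ∑ j : Fin 3, ω t i * (J i j * R t 2 j))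
        (∑ i : Fin 3, ∑ j : Fin 3,
          (ω' t i * (J i j * R t 2 j) + ω t i * (J i j * (R t * hat (ω t)) 2 j))) t := by
      apply HasDerivAt.fun_sum; intro i _
      apply HasDerivAt.fun_sum; intro j _
      exact (hωc t i).mul ((hRc t 2 j).const_mul (J i j))
    have hfun : (fun t => ω t ⬝ᵥ J.mulVec ((R t)ᵀ.mulVec e3))
        = (fun t => ∑ i : Fin 3, ∑ j : Fin 3, ω t i * (J i j * R t 2 j)) := by
      funext u
      simp [dotProduct, mulVec, e3, Fin.sum_univ_three, transpose_apply]
      ring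
    rw [hfun]
    convert H using 1
    -- show 0 = the sum
    have hd := hdyn t
    have hd0 := congrFun hd 0
    have hd1 := congrFun hd 1
    have hd2 := congrFun hd 2
    simp [mulVec, dotProduct, crossProduct, e3, Fin.sum_univ_three, transpose_apply] at hd0 hd1 hd2
    have hs01 := congrFun (congrFun hJsymm.eq 0) 1
    have hs02 := congrFun (congrFun hJsymm.eq 0) 2
    have hs12 := congrFun (congrFun hJsymm.eq 1) 2
    simp [transpose_apply] at hs01 hs02 hs12
    simp [Fin.sum_univ_three, mul_apply, hat, mulVec, dotProduct]
    rw [hs01, hs02, hs12] at hd0 hd1 hd2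
    rw [hs01, hs02, hs12]
    linear_combination (-(R t 2 0)) * hd0 + (-(R t 2 1)) * hd1 + (-(R t 2 2)) * hd2
  intro t s
  have : ∀ a b : ℝ, (fun t => ω t ⬝ᵥ J.mulVec ((R t)ᵀ.mulVec e3)) a
      = (fun t => ω t ⬝ᵥ J.mulVec ((R t)ᵀ.mulVec e3)) b := by
    intro a b
    have hc := is_const_of_deriv_eq_zero (f := fun t => ω t ⬝ᵥ J.mulVec ((R t)ᵀ.mulVec e3))
      (fun u => (key u).differentiableAt) (fun u => (key u).deriv)
    exact hc a b
  exact this t s
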